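/- Fix α, β ∈ (0,1) with β ≠ α, and let m_β(r) = β for 0 < r < 1/2 and m_β(r) = α for r ≥ 1/2. Then (i) the supremum over G ∈ C¹_K((0,1/2)) of { −∫₀^{1/2} G'(r) m_β(r) dr − ∫₀^{1/2} σ(m_β(r)) G(r)² dr } equals 0, while (ii) the supremum over G ∈ C¹_K((0,∞)) of { −∫₀^∞ G'(r) m_β(r) dr − ∫₀^∞ σ(m_β(r)) G(r)² dr } equals +∞; in particular the step density m_β has infinite energy Q(m_β(r)dr) = +∞. -/

import Mathlib

open MeasureTheory Set Filter
open scoped ENNReal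

noncomputable section

/-- `G` is continuously differentiable with compact support contained in `(0, ∞)`. -/
def IsC1K (G : ℝ → ℝ) : Prop :=
  ContDiff ℝ 1 G ∧ HasCompactSupport G ∧ tsupport G ⊆ Set.Ioi 0

/-- `G` is continuously differentiable with compact support contained in `(0, 1/2)`. -/
def IsC1KHalf (G : ℝ → ℝ) : Prop :=
  ContDiff ℝ 1 G ∧ HasCompactSupport G ∧ tsupport G ⊆ Set.Ioo 0 (1/2)

/-- The expression inside the supremum defining the energy. -/
def energyExpr (m G : ℝ → ℝ) : ℝ :=
  (- ∫ r in Set.Ioi (0:ℝ), deriv G r * m r)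
    - ∫ r in Set.Ioi (0:ℝ), (m r * (1 - m r)) * (G r) ^ 2

/-- The energy functional `Q(m(r)dr)`, with values in `ℝ≥0∞`. -/
def energy (m : ℝ → ℝ) : ℝ≥0∞ :=
  ⨆ G : {G : ℝ → ℝ // IsC1K G}, ENNReal.ofReal (energyExpr m G.1)

/-- The step density `m_β`: equal to `β` on `(0,1/2)` and to `α` on `[1/2,∞)`. -/
def mBeta (α β : ℝ) : ℝ → ℝ := fun r => if r < 1/2 then β else α

lemma measurable_mBeta (α β : ℝ) : Measurable (mBeta α β) := by
  unfold mBeta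
  exact Measurable.ite (measurableSet_lt measurable_id measurable_const)
    measurable_const measurable_const

lemma mBeta_mem {α β : ℝ} (hα : α ∈ Set.Ioo (0:ℝ) 1) (hβ : β ∈ Set.Ioo (0:ℝ) 1)
    (x : ℝ) : mBeta α β x ∈ Set.Ioo (0:ℝ) 1 := by
  unfold mBeta; split <;> assumption

lemma sigma_bounds {t : ℝ} (ht : t ∈ Set.Ioo (0:ℝ) 1) :
    0 ≤ t * (1 - t) ∧ t * (1 - t) ≤ 1/4 := by
  obtain ⟨h1, h2⟩ := ht
  constructor
  · nlinarith
  · nlinarith [sq_nonneg (t - 1/2)]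

set_option maxHeartbeats 1000000 in
/-- The key construction: for any `M > 0` one can find an admissible `G`
with energy expression at least `M`. -/
lemma exists_energyExpr_big {α β : ℝ} (hα : α ∈ Set.Ioo (0:ℝ) 1)
    (hβ : β ∈ Set.Ioo (0:ℝ) 1) (hne : β ≠ α) {M : ℝ} (hM : 0 < M) :
    ∃ G : ℝ → ℝ, IsC1K G ∧ M ≤ energyExpr (mBeta α β) G := by
  set d : ℝ := α - β with hd_def
  have hd : d ≠ 0 := sub_ne_zero.mpr (Ne.symm hne)
  set r : ℝ := min (d^2 / (2*M)) (1/4) with hr_def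
  have hrpos : 0 < r := lt_min (by positivity) (by norm_num)
  have hr4 : r ≤ 1/4 := min_le_right _ _
  have hrM : r ≤ d^2 / (2*M) := min_le_left _ _
  set c : ℝ := 2*M/d with hc_def
  set φ : ContDiffBump (1/2 : ℝ) :=
    { rIn := r/2, rOut := r, rIn_pos := by positivity,
      rIn_lt_rOut := by linarith } with hφ_def
  set G : ℝ → ℝ := fun x => c * φ x with hG_def
  have hG1 : ContDiff ℝ 1 G := contDiff_const.mul φ.contDiff
  have hzero : ∀ x, x ∉ Set.Icc (1/2 - r) (1/2 + r) → G x = 0 := by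
    intro x hx
    have : φ x = 0 := by
      apply φ.zero_of_le_dist
      rw [Real.dist_eq]
      simp only [mem_Icc, not_and_or, not_le] at hx
      rcases hx with h | h
      · rw [abs_sub_comm, abs_of_nonneg (by linarith)]; show r ≤ 1/2 - x; linarith
      · rw [abs_of_nonneg (by linarith)]; show r ≤ x - 1/2; linarith
    simp [hG_def, this]
  have hcs : HasCompactSupport G := HasCompactSupport.intro isCompact_Icc hzero
  have hts : tsupport G ⊆ Set.Icc (1/2 - r) (1/2 + r) :=
    closure_minimal (Function.support_subset_iff'.mpr hzero) isClosed_Icc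
  have hIsC1K : IsC1K G := by
    refine ⟨hG1, hcs, fun x hx => ?_⟩
    have := (hts hx).1
    simp only [Set.mem_Ioi]; linarith
  have hG_cont : Continuous G := hG1.continuous
  have hd_cont : Continuous (deriv G) := hG1.continuous_deriv le_rfl
  have hd_int : Integrable (deriv G) := hd_cont.integrable_of_hasCompactSupport hcs.deriv
  have hGhalf : G (1/2) = c := by
    have h1 : φ (1/2) = 1 :=
      φ.one_of_mem_closedBall (Metric.mem_closedBall_self (by positivity))
    show c * φ (1/2) = c
    rw [h1, mul_one]
  have hG0 : G 0 = 0 := hzero 0 (by simp only [mem_Icc, not_and_or, not_le]; left; linarith)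
  have hG1v : G 1 = 0 := hzero 1 (by simp only [mem_Icc, not_and_or, not_le]; right; linarith)
  have hdiff : ∀ x : ℝ, DifferentiableAt ℝ G x := fun x =>
    (hG1.differentiable one_ne_zero).differentiableAt
  -- first integral
  have hIoo : ∫ x in Set.Ioo (0:ℝ) (1/2), deriv G x = G (1/2) - G 0 := by
    rw [← integral_Ioc_eq_integral_Ioo, ← intervalIntegral.integral_of_le (by norm_num)]
    exact intervalIntegral.integral_deriv_eq_sub (fun x _ => hdiff x)
      (hd_cont.intervalIntegrable _ _)
  have hIci : ∫ x in Set.Ici (1/2 : ℝ), deriv G x = G 1 - G (1/2) := by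
    rw [integral_Ici_eq_integral_Ioi,
      ← Set.Ioc_union_Ioi_eq_Ioi (by norm_num : (1/2:ℝ) ≤ 1),
      setIntegral_union (Set.Ioc_disjoint_Ioi le_rfl) measurableSet_Ioi
        hd_int.integrableOn hd_int.integrableOn]
    have h2 : ∫ x in Set.Ioi (1:ℝ), deriv G x = 0 := by
      rw [setIntegral_congr_fun measurableSet_Ioi
        (fun x hx => ?_ : Set.EqOn (deriv G) (fun _ => (0:ℝ)) (Set.Ioi 1))]
      · simp
      · by_contra h
        have hx1 : (1:ℝ) < x := hx
        have : x ∈ tsupport G := support_deriv_subset (Function.mem_support.mpr h)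
        have := (hts this).2
        linarith
    have h1 : ∫ x in Set.Ioc (1/2 : ℝ) 1, deriv G x = G 1 - G (1/2) := by
      rw [← intervalIntegral.integral_of_le (by norm_num)]
      exact intervalIntegral.integral_deriv_eq_sub (fun x _ => hdiff x)
        (hd_cont.intervalIntegrable _ _)
    rw [h1, h2, add_zero]
  have hmb : ∀ x : ℝ, ‖mBeta α β x‖ ≤ 1 := by
    intro x
    have := mBeta_mem hα hβ x
    rw [Real.norm_eq_abs, abs_le]
    constructor <;> [linarith [this.1]; linarith [this.2]]
  have hprod_int : Integrable (fun x => deriv G x * mBeta α β x) := by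
    have := hd_int.bdd_mul (measurable_mBeta α β).aestronglyMeasurable (Filter.Eventually.of_forall hmb)
    simpa [mul_comm] using this
  have hI1 : ∫ x in Set.Ioi (0:ℝ), deriv G x * mBeta α β x = -(c * d) := by
    have hdisj : Disjoint (Set.Ioo (0:ℝ) (1/2)) (Set.Ici (1/2 : ℝ)) :=
      Set.disjoint_left.mpr (fun x hx hx' => absurd hx.2 (not_lt.mpr hx'))
    have heq1 : Set.EqOn (fun x => deriv G x * mBeta α β x)
        (fun x => deriv G x * β) (Set.Ioo (0:ℝ) (1/2)) := by
      intro x hx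
      have hm : mBeta α β x = β := by unfold mBeta; rw [if_pos hx.2]
      show deriv G x * mBeta α β x = deriv G x * β
      rw [hm]
    have heq2 : Set.EqOn (fun x => deriv G x * mBeta α β x)
        (fun x => deriv G x * α) (Set.Ici (1/2 : ℝ)) := by
      intro x hx
      have hm : mBeta α β x = α := by
        unfold mBeta; rw [if_neg (not_lt.mpr (hx : (1/2:ℝ) ≤ x))]
      show deriv G x * mBeta α β x = deriv G x * α
      rw [hm]
    have e1 : ∫ x in Set.Ioo (0:ℝ) (1/2), deriv G x * mBeta α β x
        = (G (1/2) - G 0) * β := by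
      rw [setIntegral_congr_fun measurableSet_Ioo heq1, integral_mul_const, hIoo]
    have e2 : ∫ x in Set.Ici (1/2:ℝ), deriv G x * mBeta α β x
        = (G 1 - G (1/2)) * α := by
      rw [setIntegral_congr_fun measurableSet_Ici heq2, integral_mul_const, hIci]
    rw [← Set.Ioo_union_Ici_eq_Ioi (by norm_num : (0:ℝ) < 1/2),
      setIntegral_union hdisj measurableSet_Ici
        hprod_int.integrableOn hprod_int.integrableOn, e1, e2, hGhalf, hG0, hG1v]
    ring
  -- second integral
  have hG2_cs : HasCompactSupport (fun x => G x ^ 2) :=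
    HasCompactSupport.intro isCompact_Icc (fun x hx => by rw [hzero x hx]; ring)
  have hG2_int : Integrable (fun x => G x ^ 2) :=
    (hG_cont.pow 2).integrable_of_hasCompactSupport hG2_cs
  have hsm : ∀ x : ℝ, ‖mBeta α β x * (1 - mBeta α β x)‖ ≤ 1/4 := by
    intro x
    obtain ⟨h0, h4⟩ := sigma_bounds (mBeta_mem hα hβ x)
    rw [Real.norm_eq_abs, abs_of_nonneg h0]; exact h4
  have hS_int : Integrable (fun x => (mBeta α β x * (1 - mBeta α β x)) * G x ^ 2) := by
    exact hG2_int.bdd_mul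
      (((measurable_mBeta α β).mul
        (measurable_const.sub (measurable_mBeta α β))).aestronglyMeasurable) (Filter.Eventually.of_forall hsm)
  have hS_le : ∫ x in Set.Ioi (0:ℝ), (mBeta α β x * (1 - mBeta α β x)) * G x ^ 2
      ≤ (1/4) * (c^2 * (2*r)) := by
    have step1 : ∫ x in Set.Ioi (0:ℝ), (mBeta α β x * (1 - mBeta α β x)) * G x ^ 2
        ≤ ∫ x in Set.Ioi (0:ℝ), (1/4) * G x ^ 2 := by
      apply setIntegral_mono_on hS_int.integrableOn
        (hG2_int.const_mul _).integrableOn measurableSet_Ioi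
      intro x _
      have := (sigma_bounds (mBeta_mem hα hβ x)).2
      have hg2 : (0:ℝ) ≤ G x ^ 2 := sq_nonneg _
      nlinarith
    have step2 : ∫ x in Set.Ioi (0:ℝ), (1/4) * G x ^ 2
        ≤ (1/4) * ∫ x, G x ^ 2 := by
      rw [integral_const_mul]
      have := setIntegral_le_integral (s := Set.Ioi (0:ℝ)) hG2_int
        (Filter.Eventually.of_forall (fun x => sq_nonneg (G x)))
      linarith
    have step3 : ∫ x, G x ^ 2 ≤ c^2 * (2*r) := by
      have hind : Integrable
          ((Set.Icc (1/2 - r) (1/2 + r)).indicator (fun _ => c^2)) := by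
        rw [integrable_indicator_iff measurableSet_Icc]
        exact integrableOn_const (by rw [Real.volume_Icc]; exact ENNReal.ofReal_ne_top)
      have hmono : ∀ x, G x ^ 2 ≤
          (Set.Icc (1/2 - r) (1/2 + r)).indicator (fun _ => c^2) x := by
        intro x
        by_cases hx : x ∈ Set.Icc (1/2 - r) (1/2 + r)
        · rw [Set.indicator_of_mem hx]
          have h1 : φ x ≤ 1 := φ.le_one
          have h0 : 0 ≤ φ x := φ.nonneg
          have : G x ^ 2 = c^2 * (φ x)^2 := by rw [hG_def]; ring
          rw [this]
          have : (φ x)^2 ≤ 1 := by nlinarith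
          nlinarith [sq_nonneg c]
        · rw [Set.indicator_of_notMem hx, hzero x hx]; norm_num
      calc ∫ x, G x ^ 2
          ≤ ∫ x, (Set.Icc (1/2 - r) (1/2 + r)).indicator (fun _ => c^2) x :=
            integral_mono hG2_int hind hmono
        _ = c^2 * (2*r) := by
            rw [integral_indicator_const _ measurableSet_Icc, Real.volume_real_Icc_of_le (by linarith), smul_eq_mul]
            ring
      -- done
    calc ∫ x in Set.Ioi (0:ℝ), (mBeta α β x * (1 - mBeta α β x)) * G x ^ 2
        ≤ ∫ x in Set.Ioi (0:ℝ), (1/4) * G x ^ 2 := step1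
      _ ≤ (1/4) * ∫ x, G x ^ 2 := step2
      _ ≤ (1/4) * (c^2 * (2*r)) := by nlinarith
  refine ⟨G, hIsC1K, ?_⟩
  have hcd : c * d = 2 * M := by rw [hc_def]; field_simp
  have hquad : (1/4) * (c^2 * (2*r)) ≤ M := by
    have key : c^2 * (d^2/(2*M)) = 2*M := by
      rw [hc_def]; field_simp
    have hc2 : (0:ℝ) ≤ c^2 := sq_nonneg c
    nlinarith
  have : energyExpr (mBeta α β) G
      = -(-(c*d)) - ∫ x in Set.Ioi (0:ℝ), (mBeta α β x * (1 - mBeta α β x)) * G x ^ 2 := by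
    rw [energyExpr, hI1]
  rw [this, hcd]
  linarith
/-- For the step density `m_β` with `β ≠ α`, the supremum of the energy expression over
`C¹_K((0,1/2))` (with integrals over `(0,1/2)`) vanishes, while the energy over
`C¹_K((0,∞))` is infinite: `Q(m_β(r)dr) = +∞`. -/
theorem stmt4 (α β : ℝ) (hα : α ∈ Set.Ioo (0:ℝ) 1) (hβ : β ∈ Set.Ioo (0:ℝ) 1)
    (hne : β ≠ α) :
    (⨆ G : {G : ℝ → ℝ // IsC1KHalf G}, ENNReal.ofReal
        ((- ∫ r in Set.Ioo (0:ℝ) (1/2), deriv G.1 r * mBeta α β r)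
          - ∫ r in Set.Ioo (0:ℝ) (1/2),
              (mBeta α β r * (1 - mBeta α β r)) * (G.1 r) ^ 2)) = 0 ∧
    energy (mBeta α β) = ⊤ := by
  constructor
  · rw [ENNReal.iSup_eq_zero]
    rintro ⟨G, hG1, hGc, hGs⟩
    rw [ENNReal.ofReal_eq_zero]
    have hA : ∫ x in Set.Ioo (0:ℝ) (1/2), deriv G x * mBeta α β x = 0 := by
      have heq1 : Set.EqOn (fun x => deriv G x * mBeta α β x)
          (fun x => deriv G x * β) (Set.Ioo (0:ℝ) (1/2)) := by
        intro x hx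
        have hm : mBeta α β x = β := by unfold mBeta; rw [if_pos hx.2]
        show deriv G x * mBeta α β x = deriv G x * β
        rw [hm]
      rw [setIntegral_congr_fun measurableSet_Ioo heq1, integral_mul_const]
      have hftc : ∫ x in Set.Ioo (0:ℝ) (1/2), deriv G x = G (1/2) - G 0 := by
        rw [← integral_Ioc_eq_integral_Ioo, ← intervalIntegral.integral_of_le (by norm_num)]
        exact intervalIntegral.integral_deriv_eq_sub
          (fun x _ => (hG1.differentiable one_ne_zero).differentiableAt)
          ((hG1.continuous_deriv le_rfl).intervalIntegrable _ _)
      have hz0 : G 0 = 0 := by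
        apply image_eq_zero_of_notMem_tsupport
        intro h
        exact absurd (hGs h).1 (lt_irrefl 0)
      have hzh : G (1/2) = 0 := by
        apply image_eq_zero_of_notMem_tsupport
        intro h
        exact absurd (hGs h).2 (lt_irrefl (1/2))
      rw [hftc, hz0, hzh]; ring
    have hB : 0 ≤ ∫ x in Set.Ioo (0:ℝ) (1/2),
        (mBeta α β x * (1 - mBeta α β x)) * G x ^ 2 := by
      apply setIntegral_nonneg measurableSet_Ioo
      intro x _
      have := (sigma_bounds (mBeta_mem hα hβ x)).1
      have := sq_nonneg (G x)
      positivity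
    rw [hA]
    linarith
  · rw [energy, iSup_eq_top]
    intro b hb
    set M : ℝ := max 1 (b.toReal + 1) with hM_def
    have hM : 0 < M := lt_of_lt_of_le one_pos (le_max_left _ _)
    obtain ⟨G, hGK, hGE⟩ := exists_energyExpr_big hα hβ hne hM
    refine ⟨⟨G, hGK⟩, ?_⟩
    calc b < ENNReal.ofReal M := by
            rw [ENNReal.lt_ofReal_iff_toReal_lt hb.ne]
            exact lt_of_lt_of_le (lt_add_one _) (le_max_right _ _)
      _ ≤ ENNReal.ofReal (energyExpr (mBeta α β) G) := ENNReal.ofReal_le_ofReal hGE
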